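/- Let ρ1 and ρ2 be n×n density matrices and let d : ℝ^n → ℝ be a Schur-convex function. Then for every n×n unitary matrix U one has d(λ(ρ1 − Uρ2U†)) ≥ d(λ(Λ↓(ρ1) − Λ↓(ρ2))), and there exists a unitary U for which equality holds; in other words, the minimum of d(λ(ρ1 − Uρ2U†)) over all unitary U equals d(λ(Λ↓(ρ1) − Λ↓(ρ2))). -/

import Mathlib

open Matrix
open scoped ComplexOrder Classical

/-- The vector of a tuple's entries sorted in decreasing (nonincreasing) order. -/
noncomputable def sortDec {n : ℕ} (x : Fin n → ℝ) : Fin n → ℝ :=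
  fun i => x (Tuple.sort x i.rev)

/-- The eigenvalues of a Hermitian matrix arranged in decreasing order,
`λ(A)`; junk value `0` if `A` is not Hermitian. -/
noncomputable def eigsDec {n : ℕ} (A : Matrix (Fin n) (Fin n) ℂ) : Fin n → ℝ :=
  if hA : A.IsHermitian then sortDec hA.eigenvalues else 0

/-- The eigenvalues of a Hermitian matrix arranged in increasing order. -/
noncomputable def eigsInc {n : ℕ} (A : Matrix (Fin n) (Fin n) ℂ) : Fin n → ℝ :=
  fun i => eigsDec A i.rev

/-- `Λ↓(A)`: the diagonal matrix of the eigenvalues of `A` in decreasing order. -/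
noncomputable def LambdaDown {n : ℕ} (A : Matrix (Fin n) (Fin n) ℂ) :
    Matrix (Fin n) (Fin n) ℂ :=
  Matrix.diagonal fun i => (eigsDec A i : ℂ)

/-- `Λ↑(A)`: the diagonal matrix of the eigenvalues of `A` in increasing order. -/
noncomputable def LambdaUp {n : ℕ} (A : Matrix (Fin n) (Fin n) ℂ) :
    Matrix (Fin n) (Fin n) ℂ :=
  Matrix.diagonal fun i => (eigsInc A i : ℂ)

/-- `x ≺ y`: the sum of the `k` largest entries of `x` is at most that of `y`
for every `k`, with equality of the total sums. -/
def Majorizes {n : ℕ} (x y : Fin n → ℝ) : Prop :=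
  (∀ k : ℕ, ∑ i ∈ Finset.univ.filter (fun i : Fin n => (i : ℕ) < k), sortDec x i ≤
      ∑ i ∈ Finset.univ.filter (fun i : Fin n => (i : ℕ) < k), sortDec y i) ∧
    (∑ i, x i) = ∑ i, y i

/-- A function `d` is Schur-convex if `x ≺ y` implies `d x ≤ d y`. -/
def SchurConvex {n : ℕ} (d : (Fin n → ℝ) → ℝ) : Prop :=
  ∀ x y : Fin n → ℝ, Majorizes x y → d x ≤ d y

/-- A density matrix: positive semidefinite with trace one. -/
def IsDensityMatrix {n : ℕ} (ρ : Matrix (Fin n) (Fin n) ℂ) : Prop :=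
  ρ.PosSemidef ∧ ρ.trace = 1

/-- A quantum channel: completely positive trace preserving map in Kraus form. -/
def IsQuantumChannel {n : ℕ}
    (Φ : Matrix (Fin n) (Fin n) ℂ → Matrix (Fin n) (Fin n) ℂ) : Prop :=
  ∃ (r : ℕ) (F : Fin r → Matrix (Fin n) (Fin n) ℂ),
    (∑ j, (F j)ᴴ * F j) = 1 ∧ ∀ X, Φ X = ∑ j, F j * X * (F j)ᴴ

/-- A unital quantum channel. -/
def IsUnitalChannel {n : ℕ}
    (Φ : Matrix (Fin n) (Fin n) ℂ → Matrix (Fin n) (Fin n) ℂ) : Prop :=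
  IsQuantumChannel Φ ∧ Φ 1 = 1

/-- A mixed unitary channel: a convex combination of unitary conjugations. -/
def IsMixedUnitaryChannel {n : ℕ}
    (Φ : Matrix (Fin n) (Fin n) ℂ → Matrix (Fin n) (Fin n) ℂ) : Prop :=
  ∃ (r : ℕ) (t : Fin r → ℝ) (U : Fin r → Matrix (Fin n) (Fin n) ℂ),
    (∀ j, 0 ≤ t j) ∧ (∑ j, t j) = 1 ∧
      (∀ j, U j ∈ Matrix.unitaryGroup (Fin n) ℂ) ∧
      ∀ X, Φ X = ∑ j, (t j : ℂ) • (U j * X * (U j)ᴴ)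

/-- Functional calculus: `f(A)` for a Hermitian matrix `A`, via the spectral theorem;
junk value `0` if `A` is not Hermitian. -/
noncomputable def matFun {n : ℕ} (f : ℝ → ℝ) (A : Matrix (Fin n) (Fin n) ℂ) :
    Matrix (Fin n) (Fin n) ℂ :=
  if hA : A.IsHermitian then
    (hA.eigenvectorUnitary : Matrix (Fin n) (Fin n) ℂ) *
      Matrix.diagonal (fun i => (f (hA.eigenvalues i) : ℂ)) *
      (hA.eigenvectorUnitary : Matrix (Fin n) (Fin n) ℂ)ᴴ
  else 0

/-- The positive semidefinite square root of a PSD matrix, as `Matrix.PosSemidef.sqrt`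
was defined in Mathlib (December 2024). -/
noncomputable def psdSqrt {n : ℕ} {A : Matrix (Fin n) (Fin n) ℂ} (hA : A.PosSemidef) :
    Matrix (Fin n) (Fin n) ℂ :=
  hA.1.eigenvectorUnitary.1 * diagonal ((↑) ∘ (√·) ∘ hA.1.eigenvalues) *
    (star hA.1.eigenvectorUnitary : Matrix (Fin n) (Fin n) ℂ)

/-- `|A| = (AᴴA)^{1/2}`. -/
noncomputable def matAbs {n : ℕ} (A : Matrix (Fin n) (Fin n) ℂ) :
    Matrix (Fin n) (Fin n) ℂ :=
  psdSqrt (Matrix.posSemidef_conjTranspose_mul_self A)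

/-- `tr|A|`, the sum of the singular values of `A`. -/
noncomputable def traceAbs {n : ℕ} (A : Matrix (Fin n) (Fin n) ℂ) : ℝ :=
  ((matAbs A).trace).re

/-- The singular values of `A` in decreasing order. -/
noncomputable def singVals {n : ℕ} (A : Matrix (Fin n) (Fin n) ℂ) : Fin n → ℝ :=
  eigsDec (matAbs A)

/-- The positive semidefinite square root of a PSD matrix (junk value `0` otherwise). -/
noncomputable def matSqrt {n : ℕ} (A : Matrix (Fin n) (Fin n) ℂ) :
    Matrix (Fin n) (Fin n) ℂ :=
  if hA : A.PosSemidef then psdSqrt hA else 0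

/-- The fidelity `F(ρ,σ) = tr|ρ^{1/2} σ^{1/2}|`. -/
noncomputable def fidelity {n : ℕ} (ρ σ : Matrix (Fin n) (Fin n) ℂ) : ℝ :=
  traceAbs (matSqrt ρ * matSqrt σ)

/-- The relative entropy `S(ρ‖σ) = tr(ρ (log ρ - log σ))`. -/
noncomputable def relEntropy {n : ℕ} (ρ σ : Matrix (Fin n) (Fin n) ℂ) : ℝ :=
  ((ρ * (matFun Real.log ρ - matFun Real.log σ)).trace).re

/-- The (real) trace of a matrix whose trace is real. -/
noncomputable def trR {n : ℕ} (A : Matrix (Fin n) (Fin n) ℂ) : ℝ := A.trace.re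

lemma sortDec_antitone {n : ℕ} (x : Fin n → ℝ) : Antitone (sortDec x) := by
  intro i j hij
  exact Tuple.monotone_sort x (by simpa [Fin.rev_le_rev] using hij)

lemma sortDec_of_antitone {n : ℕ} {x : Fin n → ℝ} (hx : Antitone x) : sortDec x = x := by
  have h : Monotone (x ∘ ⇑(Fin.revPerm (n := n))) := fun i j hij => hx (by simpa [Fin.rev_le_rev] using hij)
  have := (Tuple.comp_sort_eq_comp_iff_monotone (f := x) (σ := Fin.revPerm)).2 h
  funext i
  have := congrFun this.symm i.rev
  simpa [sortDec, Fin.rev_rev] using this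

lemma sortDec_comp_perm {n : ℕ} (x : Fin n → ℝ) (σ : Equiv.Perm (Fin n)) :
    sortDec (x ∘ σ) = sortDec x := by
  funext i
  have := congrFun (Tuple.comp_perm_comp_sort_eq_comp_sort (f := x) (σ := σ)) i.rev
  simpa [sortDec] using this

lemma sortDec_eq_of_perm {n : ℕ} {x y : Fin n → ℝ}
    (h : (List.ofFn x).Perm (List.ofFn y)) : sortDec x = sortDec y := by
  have hx : List.Pairwise (· ≤ ·) (List.ofFn (x ∘ ⇑(Tuple.sort x))) := by
    rw [List.pairwise_ofFn]
    exact fun i j hij => Tuple.monotone_sort x hij.le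
  have hy : List.Pairwise (· ≤ ·) (List.ofFn (y ∘ ⇑(Tuple.sort y))) := by
    rw [List.pairwise_ofFn]
    exact fun i j hij => Tuple.monotone_sort y hij.le
  have hpx : (List.ofFn (x ∘ ⇑(Tuple.sort x))).Perm (List.ofFn x) := by
    rw [← Multiset.coe_eq_coe, ← Fin.univ_val_map, ← Fin.univ_val_map]
    rw [show Multiset.map (x ∘ ⇑(Tuple.sort x)) Finset.univ.val
        = Multiset.map x (Multiset.map (⇑(Tuple.sort x)) Finset.univ.val) from (Multiset.map_map _ _ _).symm,
      show Multiset.map (⇑(Tuple.sort x)) Finset.univ.val = Finset.univ.val from by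
        simpa using congrArg Finset.val (Finset.map_univ_equiv (Tuple.sort x))]
  have hpy : (List.ofFn (y ∘ ⇑(Tuple.sort y))).Perm (List.ofFn y) := by
    rw [← Multiset.coe_eq_coe, ← Fin.univ_val_map, ← Fin.univ_val_map]
    rw [show Multiset.map (y ∘ ⇑(Tuple.sort y)) Finset.univ.val
        = Multiset.map y (Multiset.map (⇑(Tuple.sort y)) Finset.univ.val) from (Multiset.map_map _ _ _).symm,
      show Multiset.map (⇑(Tuple.sort y)) Finset.univ.val = Finset.univ.val from by
        simpa using congrArg Finset.val (Finset.map_univ_equiv (Tuple.sort y))]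
  have heq : List.ofFn (x ∘ ⇑(Tuple.sort x)) = List.ofFn (y ∘ ⇑(Tuple.sort y)) :=
    List.Perm.eq_of_pairwise' hx hy ((hpx.trans h).trans hpy.symm)
  have heq' : x ∘ ⇑(Tuple.sort x) = y ∘ ⇑(Tuple.sort y) := List.ofFn_inj.1 heq
  funext i
  simpa [sortDec] using congrFun heq' i.rev

lemma sum_sortDec {n : ℕ} (x : Fin n → ℝ) : ∑ i, sortDec x i = ∑ i, x i := by
  have : ∑ i, sortDec x i = ∑ i, x ((Fin.revPerm.trans (Tuple.sort x)) i) := rfl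
  rw [this, Equiv.sum_comp]

/-- permutation matrix -/
def permMat {n : ℕ} (e : Equiv.Perm (Fin n)) : Matrix (Fin n) (Fin n) ℂ :=
  Matrix.of fun i j => if i = e j then 1 else 0

lemma permMat_apply {n : ℕ} (e : Equiv.Perm (Fin n)) (i x : Fin n) :
    permMat e i x = if x = e.symm i then (1:ℂ) else 0 := by
  simp only [permMat, Matrix.of_apply]
  by_cases h : x = e.symm i
  · subst h; simp
  · rw [if_neg h, if_neg (fun hi => h (by rw [hi, Equiv.symm_apply_apply]))]

lemma permMat_mem {n : ℕ} (e : Equiv.Perm (Fin n)) : permMat e ∈ Matrix.unitaryGroup (Fin n) ℂ := by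
  rw [Matrix.mem_unitaryGroup_iff]
  ext i j
  rw [Matrix.mul_apply, Matrix.one_apply]
  simp only [Matrix.star_apply, permMat_apply, apply_ite star, star_one, star_zero, ite_mul,
    one_mul, zero_mul, Finset.sum_ite_eq', Finset.mem_univ, if_true]
  by_cases h : i = j
  · subst h; simp
  · rw [if_neg (fun hc => h (by simpa using congrArg e hc)), if_neg h]

lemma permMat_conj_diag {n : ℕ} (e : Equiv.Perm (Fin n)) (v : Fin n → ℂ) :
    permMat e * Matrix.diagonal (v ∘ e) * (permMat e)ᴴ = Matrix.diagonal v := by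
  ext i j
  rw [Matrix.mul_apply]
  simp only [Matrix.conjTranspose_apply, Matrix.mul_diagonal, permMat_apply, apply_ite star,
    star_one, star_zero, ite_mul, one_mul, zero_mul, mul_ite, mul_one, mul_zero,
    Finset.sum_ite_eq', Finset.mem_univ, if_true, Function.comp_apply, Matrix.diagonal_apply]
  by_cases h : i = j
  · subst h; simp
  · rw [if_neg (fun hc => h (by simpa using (congrArg e hc).symm)), if_neg h]

lemma charpoly_unitary_conj {n : ℕ} {V : Matrix (Fin n) (Fin n) ℂ}
    (hV : V ∈ Matrix.unitaryGroup (Fin n) ℂ) (A : Matrix (Fin n) (Fin n) ℂ) :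
    (V * A * Vᴴ).charpoly = A.charpoly := by
  have h1 : V * Vᴴ = 1 := by
    simpa [Matrix.star_eq_conjTranspose] using Matrix.mem_unitaryGroup_iff.mp hV
  have h2 : Vᴴ * V = 1 := by
    simpa [Matrix.star_eq_conjTranspose] using Matrix.mem_unitaryGroup_iff'.mp hV
  have hmap : ∀ M N : Matrix (Fin n) (Fin n) ℂ, (M * N).map ⇑(Polynomial.C (R := ℂ))
      = M.map ⇑(Polynomial.C (R := ℂ)) * N.map ⇑(Polynomial.C (R := ℂ)) := fun M N => Matrix.map_mul
  have hcomm : (Matrix.scalar (Fin n)) (Polynomial.X : Polynomial ℂ) *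
      (Vᴴ).map ⇑(Polynomial.C (R := ℂ)) = (Vᴴ).map ⇑(Polynomial.C (R := ℂ)) *
      (Matrix.scalar (Fin n)) (Polynomial.X : Polynomial ℂ) :=
    (Matrix.scalar_commute _ (fun r' => Commute.all _ _) _)
  have hcm : Matrix.charmatrix (V * A * Vᴴ) =
      V.map ⇑(Polynomial.C (R := ℂ)) * Matrix.charmatrix A * (Vᴴ).map ⇑(Polynomial.C (R := ℂ)) := by
    rw [Matrix.charmatrix, Matrix.charmatrix, mul_sub, sub_mul]
    congr 1
    · rw [mul_assoc, hcomm, ← mul_assoc, ← hmap, h1]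
      simp
    · simp only [RingHom.mapMatrix_apply, hmap]
  rw [Matrix.charpoly, Matrix.charpoly, hcm, Matrix.det_mul, Matrix.det_mul]
  rw [mul_comm, ← mul_assoc, ← Matrix.det_mul, ← hmap, h2]
  simp

lemma isHermitian_conj_diag {n : ℕ} (V : Matrix (Fin n) (Fin n) ℂ) (d : Fin n → ℝ) :
    (V * Matrix.diagonal (fun i => (d i : ℂ)) * Vᴴ).IsHermitian := by
  have hd : (Matrix.diagonal (fun i => (d i : ℂ)))ᴴ = Matrix.diagonal (fun i => (d i : ℂ)) := by
    rw [Matrix.diagonal_conjTranspose,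
      show (star fun i => ((d i):ℂ)) = fun i => ((d i):ℂ) from funext fun i => Complex.conj_ofReal (d i)]
  unfold Matrix.IsHermitian
  rw [Matrix.conjTranspose_mul, Matrix.conjTranspose_mul, Matrix.conjTranspose_conjTranspose, hd,
    mul_assoc]

lemma charpoly_diagonal_real {n : ℕ} (d : Fin n → ℝ) :
    (Matrix.diagonal (fun i => (d i : ℂ))).charpoly
      = ∏ i, (Polynomial.X - Polynomial.C ((d i : ℂ))) := by
  rw [Matrix.charpoly_of_upperTriangular _ (Matrix.blockTriangular_diagonal _)]
  simp

lemma multiset_eq_of_prod_eq {n : ℕ} {d μ : Fin n → ℝ}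
    (h : ∏ i, (Polynomial.X - Polynomial.C ((d i : ℂ)))
        = ∏ i, (Polynomial.X - Polynomial.C ((μ i : ℂ)))) :
    (List.ofFn d).Perm (List.ofFn μ) := by
  have hd : ∏ i, (Polynomial.X - Polynomial.C ((d i : ℂ)))
      = (Multiset.map (fun a => Polynomial.X - Polynomial.C a)
          (Multiset.map (fun i => ((d i : ℂ))) Finset.univ.val)).prod := by
    rw [Multiset.map_map]; rfl
  have hμ : ∏ i, (Polynomial.X - Polynomial.C ((μ i : ℂ)))
      = (Multiset.map (fun a => Polynomial.X - Polynomial.C a)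
          (Multiset.map (fun i => ((μ i : ℂ))) Finset.univ.val)).prod := by
    rw [Multiset.map_map]; rfl
  rw [hd, hμ] at h
  have h2 := congrArg Polynomial.roots h
  rw [Polynomial.roots_multiset_prod_X_sub_C, Polynomial.roots_multiset_prod_X_sub_C] at h2
  have h3 : Multiset.map d Finset.univ.val = Multiset.map μ Finset.univ.val := by
    apply Multiset.map_injective (f := (Complex.ofReal : ℝ → ℂ)) Complex.ofReal_injective
    rw [Multiset.map_map, Multiset.map_map]
    exact h2
  rw [Fin.univ_val_map, Fin.univ_val_map] at h3
  exact Multiset.coe_eq_coe.mp h3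

/-- Master lemma: eigenvalues (decreasing) of `V diag(d) Vᴴ` are `sortDec d`. -/
lemma eigsDec_conj_diag {n : ℕ} {V : Matrix (Fin n) (Fin n) ℂ}
    (hV : V ∈ Matrix.unitaryGroup (Fin n) ℂ) (d : Fin n → ℝ) :
    eigsDec (V * Matrix.diagonal (fun i => (d i : ℂ)) * Vᴴ) = sortDec d := by
  set M := V * Matrix.diagonal (fun i => (d i : ℂ)) * Vᴴ with hMdef
  have hM : M.IsHermitian := isHermitian_conj_diag V d
  rw [eigsDec, dif_pos hM]
  have hc1 : M.charpoly = ∏ i, (Polynomial.X - Polynomial.C ((d i : ℂ))) := by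
    rw [hMdef, charpoly_unitary_conj hV, charpoly_diagonal_real]
  have hc2 : M.charpoly = ∏ i, (Polynomial.X - Polynomial.C ((hM.eigenvalues i : ℂ))) := by
    conv_lhs => rw [hM.spectral_theorem, Unitary.conjStarAlgAut_apply]
    rw [← Matrix.star_eq_conjTranspose] at *
    rw [show (star (hM.eigenvectorUnitary : Matrix (Fin n) (Fin n) ℂ))
        = ((hM.eigenvectorUnitary : Matrix (Fin n) (Fin n) ℂ))ᴴ from rfl,
      charpoly_unitary_conj (hM.eigenvectorUnitary).2,
      show (RCLike.ofReal ∘ hM.eigenvalues : Fin n → ℂ) = fun i => ((hM.eigenvalues i : ℂ)) from rfl,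
      charpoly_diagonal_real]
  exact (sortDec_eq_of_perm (multiset_eq_of_prod_eq (hc1.symm.trans hc2))).symm

/-- Sorted spectral decomposition. -/
lemma exists_unitary_sorted {n : ℕ} {A : Matrix (Fin n) (Fin n) ℂ} (hA : A.IsHermitian) :
    ∃ V ∈ Matrix.unitaryGroup (Fin n) ℂ,
      A = V * Matrix.diagonal (fun i => (eigsDec A i : ℂ)) * Vᴴ := by
  set e : Equiv.Perm (Fin n) := Fin.revPerm.trans (Tuple.sort hA.eigenvalues) with he
  have heig : (fun i => ((eigsDec A i : ℝ) : ℂ)) = (fun i => ((hA.eigenvalues i : ℂ))) ∘ e := by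
    funext i
    simp [eigsDec, dif_pos hA, sortDec, he]
  refine ⟨(hA.eigenvectorUnitary : Matrix (Fin n) (Fin n) ℂ) * permMat e,
    mul_mem (hA.eigenvectorUnitary).2 (permMat_mem e), ?_⟩
  rw [Matrix.conjTranspose_mul, heig, show (hA.eigenvectorUnitary : Matrix (Fin n) (Fin n) ℂ)
      * permMat e * (Matrix.diagonal ((fun i => ((hA.eigenvalues i : ℂ))) ∘ e))
      * ((permMat e)ᴴ * (hA.eigenvectorUnitary : Matrix (Fin n) (Fin n) ℂ)ᴴ)
      = (hA.eigenvectorUnitary : Matrix (Fin n) (Fin n) ℂ)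
      * (permMat e * (Matrix.diagonal ((fun i => ((hA.eigenvalues i : ℂ))) ∘ e)) * (permMat e)ᴴ)
      * (hA.eigenvectorUnitary : Matrix (Fin n) (Fin n) ℂ)ᴴ by simp only [mul_assoc], permMat_conj_diag]
  conv_lhs => rw [hA.spectral_theorem]
  rfl

lemma trace_eq_sum_eigsDec {n : ℕ} {A : Matrix (Fin n) (Fin n) ℂ} (hA : A.IsHermitian) :
    A.trace = ∑ i, ((eigsDec A i : ℝ) : ℂ) := by
  obtain ⟨V, hV, hAV⟩ := exists_unitary_sorted hA
  conv_lhs => rw [hAV]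
  rw [Matrix.trace_mul_cycle, show Vᴴ * V = 1 from by
    simpa [Matrix.star_eq_conjTranspose] using Matrix.mem_unitaryGroup_iff'.mp hV, one_mul,
    Matrix.trace_diagonal]

lemma eigsDec_antitone {n : ℕ} (A : Matrix (Fin n) (Fin n) ℂ) : Antitone (eigsDec A) := by
  unfold eigsDec
  split
  · exact sortDec_antitone _
  · exact antitone_const

lemma dot_conj_diag {n : ℕ} (V : Matrix (Fin n) (Fin n) ℂ) (v : Fin n → ℂ) (x : Fin n → ℂ) :
    star x ⬝ᵥ ((V * Matrix.diagonal v * Vᴴ) *ᵥ x)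
      = ∑ j, star ((Vᴴ *ᵥ x) j) * (v j * ((Vᴴ *ᵥ x) j)) := by
  rw [← Matrix.mulVec_mulVec, ← Matrix.mulVec_mulVec, Matrix.dotProduct_mulVec,
    show star x ᵥ* V = star (Vᴴ *ᵥ x) from by
      rw [Matrix.star_mulVec, Matrix.conjTranspose_conjTranspose]]
  rw [dotProduct]
  exact Finset.sum_congr rfl fun j _ => by rw [Matrix.mulVec_diagonal, Pi.star_apply]

lemma star_mul_self_re (a : ℝ) (z : ℂ) :
    (star z * ((a : ℂ) * z)).re = a * Complex.normSq z := by
  have : star z * ((a : ℂ) * z) = (a : ℂ) * (z * (starRingEnd ℂ) z) := by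
    rw [Complex.star_def]; ring
  rw [this, Complex.mul_conj]
  simp [← Complex.ofReal_mul]

lemma quad_re {n : ℕ} (V : Matrix (Fin n) (Fin n) ℂ) (d : Fin n → ℝ) (x : Fin n → ℂ) :
    (star x ⬝ᵥ ((V * Matrix.diagonal (fun i => (d i : ℂ)) * Vᴴ) *ᵥ x)).re
      = ∑ j, d j * Complex.normSq ((Vᴴ *ᵥ x) j) := by
  rw [dot_conj_diag, Complex.re_sum]
  exact Finset.sum_congr rfl fun j _ => star_mul_self_re _ _

lemma re_star_mul_self (z : ℂ) : (star z * z).re = Complex.normSq z := by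
  rw [Complex.star_def, mul_comm, Complex.mul_conj]
  simp

lemma norm_eq_sum_normSq {n : ℕ} {V : Matrix (Fin n) (Fin n) ℂ}
    (hV : V ∈ Matrix.unitaryGroup (Fin n) ℂ) (x : Fin n → ℂ) :
    ∑ j, Complex.normSq ((Vᴴ *ᵥ x) j) = (star x ⬝ᵥ x).re := by
  have h1 : V * Vᴴ = 1 := by
    simpa [Matrix.star_eq_conjTranspose] using Matrix.mem_unitaryGroup_iff.mp hV
  have key : star (Vᴴ *ᵥ x) ⬝ᵥ (Vᴴ *ᵥ x) = star x ⬝ᵥ x := by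
    rw [Matrix.star_mulVec, Matrix.conjTranspose_conjTranspose, Matrix.dotProduct_mulVec,
      Matrix.vecMul_vecMul, h1, Matrix.vecMul_one]
  calc ∑ j, Complex.normSq ((Vᴴ *ᵥ x) j) = ∑ j, (star ((Vᴴ *ᵥ x) j) * (Vᴴ *ᵥ x) j).re := by
        exact Finset.sum_congr rfl fun j _ => (re_star_mul_self _).symm
    _ = (star (Vᴴ *ᵥ x) ⬝ᵥ (Vᴴ *ᵥ x)).re := by rw [dotProduct, Complex.re_sum]; rfl
    _ = (star x ⬝ᵥ x).re := by rw [key]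

lemma dot_self_re_pos {n : ℕ} {x : Fin n → ℂ} (hx : x ≠ 0) : 0 < (star x ⬝ᵥ x).re := by
  have h : (star x ⬝ᵥ x).re = ∑ j, Complex.normSq (x j) := by
    rw [dotProduct, Complex.re_sum]
    exact Finset.sum_congr rfl fun j _ => re_star_mul_self _
  rw [h]
  obtain ⟨i, hi⟩ : ∃ i, x i ≠ 0 := by
    by_contra hc
    push_neg at hc
    exact hx (funext hc)
  exact Finset.sum_pos' (fun j _ => Complex.normSq_nonneg _)
    ⟨i, Finset.mem_univ i, by simpa using Complex.normSq_pos.mpr hi⟩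

/-- Weyl monotonicity. -/
lemma weyl_mono {n : ℕ} {A B : Matrix (Fin n) (Fin n) ℂ} (hA : A.IsHermitian)
    (hB : B.IsHermitian) (hP : (B - A).PosSemidef) (k : Fin n) :
    eigsDec A k ≤ eigsDec B k := by
  obtain ⟨V, hV, hAV⟩ := exists_unitary_sorted hA
  obtain ⟨W, hW, hBW⟩ := exists_unitary_sorted hB
  set α := eigsDec A with hα
  set β := eigsDec B with hβ
  have hn : 0 < n := k.pos
  let L : (Fin n → ℂ) →ₗ[ℂ] ({j : Fin n // j ≠ k} → ℂ) :=
    { toFun := fun x j => if k < j.1 then (Vᴴ *ᵥ x) j.1 else (Wᴴ *ᵥ x) j.1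
      map_add' := by
        intro x y; funext j; by_cases h : k < j.1 <;> simp [h, Matrix.mulVec_add]
      map_smul' := by
        intro a x; funext j; by_cases h : k < j.1 <;> simp [h, Matrix.mulVec_smul] }
  have hrank : Module.finrank ℂ ({j : Fin n // j ≠ k} → ℂ) < Module.finrank ℂ (Fin n → ℂ) := by
    rw [Module.finrank_pi, Module.finrank_pi, Fintype.card_subtype_compl, Fintype.card_fin,
      Fintype.card_subtype_eq]
    exact Nat.sub_lt hn one_pos
  obtain ⟨x, hxker, hx0⟩ := Submodule.ne_bot_iff _ |>.mp (LinearMap.ker_ne_bot_of_finrank_lt hrank)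
  have hxker' : L x = 0 := hxker
  have hc0 : ∀ j : Fin n, k < j → (Vᴴ *ᵥ x) j = 0 := by
    intro j hj
    have := congrFun hxker' ⟨j, hj.ne'⟩
    simpa [L, hj] using this
  have hw0 : ∀ j : Fin n, j < k → (Wᴴ *ᵥ x) j = 0 := by
    intro j hj
    have := congrFun hxker' ⟨j, hj.ne⟩
    simpa [L, not_lt_of_gt hj, not_lt.mpr hj.le] using this
  have hquadA : (star x ⬝ᵥ A *ᵥ x).re = ∑ j, α j * Complex.normSq ((Vᴴ *ᵥ x) j) := by
    conv_lhs => rw [hAV]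
    exact quad_re V α x
  have hquadB : (star x ⬝ᵥ B *ᵥ x).re = ∑ j, β j * Complex.normSq ((Wᴴ *ᵥ x) j) := by
    conv_lhs => rw [hBW]
    exact quad_re W β x
  have hmono : (star x ⬝ᵥ A *ᵥ x).re ≤ (star x ⬝ᵥ B *ᵥ x).re := by
    have h0 := hP.re_dotProduct_nonneg x
    rw [Matrix.sub_mulVec, dotProduct_sub] at h0
    have : (0:ℝ) ≤ (star x ⬝ᵥ B *ᵥ x).re - (star x ⬝ᵥ A *ᵥ x).re := by
      simpa [RCLike.re_to_complex] using h0
    linarith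
  have hS : 0 < (star x ⬝ᵥ x).re := dot_self_re_pos hx0
  have h1 : α k * (star x ⬝ᵥ x).re ≤ (star x ⬝ᵥ A *ᵥ x).re := by
    rw [hquadA, ← norm_eq_sum_normSq hV x, Finset.mul_sum]
    apply Finset.sum_le_sum
    intro j _
    by_cases hj : k < j
    · simp [hc0 j hj]
    · exact mul_le_mul_of_nonneg_right (eigsDec_antitone A (not_lt.mp hj))
        (Complex.normSq_nonneg _)
  have h2 : (star x ⬝ᵥ B *ᵥ x).re ≤ β k * (star x ⬝ᵥ x).re := by
    rw [hquadB, ← norm_eq_sum_normSq hW x, Finset.mul_sum]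
    apply Finset.sum_le_sum
    intro j _
    by_cases hj : j < k
    · simp [hw0 j hj]
    · exact mul_le_mul_of_nonneg_right (eigsDec_antitone B (not_lt.mp hj))
        (Complex.normSq_nonneg _)
  have := le_trans h1 (le_trans hmono h2)
  exact le_of_mul_le_mul_right (by linarith) hS

lemma isHermitian_smul_one {n : ℕ} (t : ℝ) :
    (((t : ℂ) • 1 : Matrix (Fin n) (Fin n) ℂ)).IsHermitian := by
  unfold Matrix.IsHermitian
  rw [Matrix.conjTranspose_smul, Matrix.conjTranspose_one]
  congr 1
  exact Complex.conj_ofReal t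

lemma diagonal_conj_smul_one {n : ℕ} {V : Matrix (Fin n) (Fin n) ℂ}
    (hV : V ∈ Matrix.unitaryGroup (Fin n) ℂ) (t : ℝ) :
    V * ((t : ℂ) • 1) * Vᴴ = ((t : ℂ) • 1 : Matrix (Fin n) (Fin n) ℂ) := by
  have h1 : V * Vᴴ = 1 := by
    simpa [Matrix.star_eq_conjTranspose] using Matrix.mem_unitaryGroup_iff.mp hV
  rw [Matrix.mul_smul, mul_one, Matrix.smul_mul, h1]

lemma diagonal_real_add {n : ℕ} (a b : Fin n → ℝ) :
    Matrix.diagonal (fun i => ((a i + b i : ℝ) : ℂ))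
      = Matrix.diagonal (fun i => (a i : ℂ)) + Matrix.diagonal (fun i => (b i : ℂ)) := by
  ext i j
  rcases eq_or_ne i j with rfl | h
  · simp only [Matrix.diagonal_apply_eq, Matrix.add_apply]
    push_cast
    ring
  · simp [Matrix.diagonal_apply_ne _ h]

lemma smul_one_eq_diagonal' {n : ℕ} (t : ℝ) :
    ((t : ℂ) • 1 : Matrix (Fin n) (Fin n) ℂ) = Matrix.diagonal (fun _ => (t : ℂ)) := by
  rw [Matrix.smul_one_eq_diagonal]

/-- shift lemma -/
lemma eigsDec_add_smul_one {n : ℕ} {M : Matrix (Fin n) (Fin n) ℂ} (hM : M.IsHermitian) (t : ℝ) :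
    eigsDec (M + (t : ℂ) • 1) = fun i => eigsDec M i + t := by
  obtain ⟨V, hV, hMV⟩ := exists_unitary_sorted hM
  have key : M + (t : ℂ) • 1 = V * Matrix.diagonal (fun i => ((eigsDec M i + t : ℝ) : ℂ)) * Vᴴ := by
    rw [diagonal_real_add, show (fun i => ((t:ℝ):ℂ)) = (fun _ : Fin n => (t:ℂ)) from rfl,
      ← smul_one_eq_diagonal', mul_add, add_mul, ← hMV, diagonal_conj_smul_one hV]
  rw [key, eigsDec_conj_diag hV]
  exact sortDec_of_antitone (fun i j hij => add_le_add_left (eigsDec_antitone M hij) t)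

lemma psd_conj_diag {n : ℕ} {V : Matrix (Fin n) (Fin n) ℂ} (d : Fin n → ℝ)
    (hd : ∀ i, 0 ≤ d i) :
    (V * Matrix.diagonal (fun i => (d i : ℂ)) * Vᴴ).PosSemidef := by
  refine Matrix.PosSemidef.mul_mul_conjTranspose_same ?_ V
  rw [Matrix.posSemidef_diagonal_iff]
  intro i
  rw [show ((0:ℂ) = ((0:ℝ):ℂ)) from rfl, Complex.real_le_real]
  exact hd i

lemma card_filter_lt {n : ℕ} (k : ℕ) :
    (Finset.univ.filter fun i : Fin n => (i : ℕ) < k).card = min k n := by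
  have himg : (Finset.univ.filter fun i : Fin n => (i : ℕ) < k).image Fin.val
      = Finset.range (min k n) := by
    ext m
    simp only [Finset.mem_image, Finset.mem_filter, Finset.mem_univ, true_and,
      Finset.mem_range, Nat.lt_min]
    constructor
    · rintro ⟨a, ha, rfl⟩; exact ⟨ha, a.isLt⟩
    · rintro ⟨h1, h2⟩; exact ⟨⟨m, h2⟩, h1, rfl⟩
  rw [← Finset.card_range (min k n), ← himg,
    Finset.card_image_of_injective _ Fin.val_injective]

/-- Key Lidskii-type inequality. -/
lemma lidskii_subset {n : ℕ} {A B : Matrix (Fin n) (Fin n) ℂ} (hA : A.IsHermitian)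
    (hB : B.IsHermitian) (I : Finset (Fin n)) :
    ∑ i ∈ I, (eigsDec A i - eigsDec B i)
      ≤ ∑ i ∈ Finset.univ.filter (fun i : Fin n => (i : ℕ) < I.card), eigsDec (A - B) i := by
  rcases Nat.eq_zero_or_pos I.card with h0 | hpos
  · rw [Finset.card_eq_zero.mp h0]
    simp [h0]
  have hC : (A - B).IsHermitian := hA.sub hB
  set γ := eigsDec (A - B) with hγ
  set k := I.card with hk
  have hkn : k ≤ n := by
    simpa using Finset.card_le_card (Finset.subset_univ I)
  set k0 : Fin n := ⟨k - 1, by omega⟩ with hk0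
  set t := γ k0 with ht
  obtain ⟨V, hV, hCV⟩ := exists_unitary_sorted hC
  set f : Fin n → ℝ := fun i => max (γ i - t) 0 with hf
  set P := V * Matrix.diagonal (fun i => (f i : ℂ)) * Vᴴ with hP
  have hPherm : P.IsHermitian := isHermitian_conj_diag V f
  have hPpsd : P.PosSemidef := psd_conj_diag f (fun i => le_max_right _ _)
  have hBP : (B + P).IsHermitian := hB.add hPherm
  have key1 : (B + P + (t : ℂ) • 1 - A).PosSemidef := by
    have heq : B + P + (t : ℂ) • 1 - A
        = V * Matrix.diagonal (fun i => ((f i + t - γ i : ℝ) : ℂ)) * Vᴴ := by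
      have hsplit : Matrix.diagonal (fun i => ((f i + t - γ i : ℝ) : ℂ))
          = Matrix.diagonal (fun i => (f i : ℂ)) + (t:ℂ) • 1
            - Matrix.diagonal (fun i => (γ i : ℂ)) := by
        rw [smul_one_eq_diagonal']
        ext i j
        rcases eq_or_ne i j with rfl | h
        · simp only [Matrix.diagonal_apply_eq, Matrix.add_apply, Matrix.sub_apply]
          push_cast
          ring
        · simp [Matrix.diagonal_apply_ne _ h]
      rw [← hγ] at hCV
      rw [hsplit, mul_sub, sub_mul, mul_add, add_mul, ← hP, diagonal_conj_smul_one hV, ← hCV]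
      abel
    rw [heq]
    exact psd_conj_diag _ (fun i => by
      have := le_max_left (γ i - t) 0
      simp only [hf]
      linarith)
  have hBPt : (B + P + (t : ℂ) • 1).IsHermitian := hBP.add (isHermitian_smul_one t)
  have weylA : ∀ i, eigsDec A i ≤ eigsDec (B + P) i + t := by
    intro i
    have h := weyl_mono hA hBPt key1 i
    rwa [eigsDec_add_smul_one hBP t] at h
  have weylBP : ∀ i, eigsDec B i ≤ eigsDec (B + P) i := by
    intro i
    refine weyl_mono hB hBP ?_ i
    have : B + P - B = P := by abel
    rw [this]
    exact hPpsd
  -- trace identity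
  have htr : ∑ i, (eigsDec (B + P) i - eigsDec B i) = ∑ i, f i := by
    have h1 : (B + P).trace = B.trace + P.trace := Matrix.trace_add B P
    have h2 : P.trace = ∑ i, ((f i : ℝ) : ℂ) := by
      rw [hP, Matrix.trace_mul_cycle, show Vᴴ * V = 1 from by
        simpa [Matrix.star_eq_conjTranspose] using Matrix.mem_unitaryGroup_iff'.mp hV,
        one_mul, Matrix.trace_diagonal]
    rw [trace_eq_sum_eigsDec hBP, trace_eq_sum_eigsDec hB, h2] at h1
    have hsum : ∑ i, eigsDec (B + P) i = ∑ i, eigsDec B i + ∑ i, f i := by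
      have h4 : ((∑ i, eigsDec (B + P) i : ℝ) : ℂ)
          = ((∑ i, eigsDec B i + ∑ i, f i : ℝ) : ℂ) := by
        push_cast
        exact h1
      exact_mod_cast h4
    rw [Finset.sum_sub_distrib, hsum]
    ring
  -- sum of f
  have hcard : (Finset.univ.filter fun i : Fin n => (i : ℕ) < k).card = k := by
    rw [card_filter_lt, Nat.min_eq_left hkn]
  have hsum_f : ∑ i, f i
      = (∑ i ∈ Finset.univ.filter (fun i : Fin n => (i : ℕ) < k), γ i) - k * t := by
    rw [← Finset.sum_filter_add_sum_filter_not Finset.univ (fun i : Fin n => (i : ℕ) < k) f]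
    have hfil : ∀ i ∈ Finset.univ.filter (fun i : Fin n => (i : ℕ) < k), f i = γ i - t := by
      intro i hi
      rw [Finset.mem_filter] at hi
      have hik : i ≤ k0 := by
        rw [Fin.le_def]
        simp only [hk0]
        omega
      have : t ≤ γ i := eigsDec_antitone _ hik
      simp only [hf]
      exact max_eq_left (by linarith)
    have hnfil : ∀ i ∈ Finset.univ.filter (fun i : Fin n => ¬ (i : ℕ) < k), f i = 0 := by
      intro i hi
      rw [Finset.mem_filter] at hi
      have hik : k0 ≤ i := by
        rw [Fin.le_def]
        simp only [hk0]
        omega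
      have : γ i ≤ t := eigsDec_antitone _ hik
      simp only [hf]
      exact max_eq_right (by linarith)
    rw [Finset.sum_congr rfl hfil, Finset.sum_congr rfl hnfil, Finset.sum_const_zero, add_zero,
      Finset.sum_sub_distrib, Finset.sum_const, hcard]
    push_cast
    ring
  -- main chain
  calc ∑ i ∈ I, (eigsDec A i - eigsDec B i)
      ≤ ∑ i ∈ I, (eigsDec (B + P) i + t - eigsDec B i) :=
        Finset.sum_le_sum (fun i _ => by have := weylA i; linarith)
    _ = ∑ i ∈ I, ((eigsDec (B + P) i - eigsDec B i) + t) :=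
        Finset.sum_congr rfl (fun i _ => by ring)
    _ = (∑ i ∈ I, (eigsDec (B + P) i - eigsDec B i)) + k * t := by
        rw [Finset.sum_add_distrib, Finset.sum_const, ← hk, nsmul_eq_mul]
    _ ≤ (∑ i, (eigsDec (B + P) i - eigsDec B i)) + k * t := by
        have := Finset.sum_le_sum_of_subset_of_nonneg (Finset.subset_univ I)
          (fun i _ _ => by have := weylBP i; linarith : ∀ i ∈ Finset.univ, i ∉ I →
            0 ≤ eigsDec (B + P) i - eigsDec B i)
        linarith
    _ = ∑ i, f i + k * t := by rw [htr]
    _ = ∑ i ∈ Finset.univ.filter (fun i : Fin n => (i : ℕ) < k), γ i := by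
        rw [hsum_f]; ring

lemma unitary_star_mem {n : ℕ} {V : Matrix (Fin n) (Fin n) ℂ}
    (hV : V ∈ Matrix.unitaryGroup (Fin n) ℂ) : Vᴴ ∈ Matrix.unitaryGroup (Fin n) ℂ := by
  rw [← Matrix.star_eq_conjTranspose]
  exact Unitary.star_mem hV

lemma one_mem_unitary {n : ℕ} : (1 : Matrix (Fin n) (Fin n) ℂ) ∈ Matrix.unitaryGroup (Fin n) ℂ := by
  rw [Matrix.mem_unitaryGroup_iff]
  simp

lemma re_trace_eq {n : ℕ} {A : Matrix (Fin n) (Fin n) ℂ} (hA : A.IsHermitian) :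
    A.trace.re = ∑ i, eigsDec A i := by
  rw [trace_eq_sum_eigsDec hA, Complex.re_sum]
  simp

lemma isHermitian_conj {n : ℕ} {A U : Matrix (Fin n) (Fin n) ℂ} (hA : A.IsHermitian) :
    (U * A * Uᴴ).IsHermitian := by
  unfold Matrix.IsHermitian
  rw [Matrix.conjTranspose_mul, Matrix.conjTranspose_mul, Matrix.conjTranspose_conjTranspose,
    hA.eq, mul_assoc]

lemma eigsDec_conj {n : ℕ} {A U : Matrix (Fin n) (Fin n) ℂ} (hA : A.IsHermitian)
    (hU : U ∈ Matrix.unitaryGroup (Fin n) ℂ) : eigsDec (U * A * Uᴴ) = eigsDec A := by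
  obtain ⟨V, hV, hAV⟩ := exists_unitary_sorted hA
  have key : U * A * Uᴴ = (U * V) * Matrix.diagonal (fun i => (eigsDec A i : ℂ)) * (U * V)ᴴ := by
    conv_lhs => rw [hAV]
    rw [Matrix.conjTranspose_mul]
    simp only [mul_assoc]
  rw [key, eigsDec_conj_diag (mul_mem hU hV)]
  exact sortDec_of_antitone (eigsDec_antitone A)

lemma eigsDec_diag_real {n : ℕ} (w : Fin n → ℝ) :
    eigsDec (Matrix.diagonal fun i => (w i : ℂ)) = sortDec w := by
  have := eigsDec_conj_diag (one_mem_unitary (n := n)) w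
  rwa [one_mul, Matrix.conjTranspose_one, mul_one] at this

lemma diagonal_real_sub {n : ℕ} (a b : Fin n → ℝ) :
    Matrix.diagonal (fun i => (a i : ℂ)) - Matrix.diagonal (fun i => (b i : ℂ))
      = Matrix.diagonal (fun i => ((a i - b i : ℝ) : ℂ)) := by
  ext i j
  rcases eq_or_ne i j with rfl | h
  · simp only [Matrix.sub_apply, Matrix.diagonal_apply_eq]
    push_cast
    ring
  · simp [Matrix.diagonal_apply_ne _ h]

/-- The central majorization result. -/
lemma majorizes_key {n : ℕ} {ρ1 ρ2 U : Matrix (Fin n) (Fin n) ℂ}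
    (hρ1 : ρ1.IsHermitian) (hρ2 : ρ2.IsHermitian) (hU : U ∈ Matrix.unitaryGroup (Fin n) ℂ) :
    Majorizes (eigsDec (LambdaDown ρ1 - LambdaDown ρ2)) (eigsDec (ρ1 - U * ρ2 * Uᴴ)) := by
  have hρ2' : (U * ρ2 * Uᴴ).IsHermitian := isHermitian_conj hρ2
  have hM : (ρ1 - U * ρ2 * Uᴴ).IsHermitian := hρ1.sub hρ2'
  set w : Fin n → ℝ := fun i => eigsDec ρ1 i - eigsDec ρ2 i with hw
  have hLD : LambdaDown ρ1 - LambdaDown ρ2 = Matrix.diagonal (fun i => ((w i : ℝ) : ℂ)) := by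
    unfold LambdaDown
    rw [diagonal_real_sub]
  have hx : eigsDec (LambdaDown ρ1 - LambdaDown ρ2) = sortDec w := by
    rw [hLD, eigsDec_diag_real]
  have hβ' : eigsDec (U * ρ2 * Uᴴ) = eigsDec ρ2 := eigsDec_conj hρ2 hU
  constructor
  · intro k
    rw [hx, sortDec_of_antitone (sortDec_antitone w),
      sortDec_of_antitone (eigsDec_antitone (ρ1 - U * ρ2 * Uᴴ))]
    set πe : Equiv.Perm (Fin n) := Fin.revPerm.trans (Tuple.sort w) with hπ
    set F := Finset.univ.filter (fun i : Fin n => (i : ℕ) < k) with hF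
    set I₀ := F.image πe with hI₀
    have hsum : ∑ i ∈ F, sortDec w i = ∑ i ∈ I₀, w i := by
      rw [hI₀, Finset.sum_image (fun a _ b _ h => πe.injective h)]
      exact Finset.sum_congr rfl fun i _ => rfl
    have hkey := lidskii_subset hρ1 hρ2' I₀
    rw [hβ'] at hkey
    have hkey' : ∑ i ∈ I₀, w i
        ≤ ∑ i ∈ Finset.univ.filter (fun i : Fin n => (i : ℕ) < I₀.card),
            eigsDec (ρ1 - U * ρ2 * Uᴴ) i := hkey
    have hcard : I₀.card = F.card := Finset.card_image_of_injective _ πe.injective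
    have hfil : Finset.univ.filter (fun i : Fin n => (i : ℕ) < I₀.card) = F := by
      rw [hcard, hF, card_filter_lt]
      ext i
      simp only [Finset.mem_filter, Finset.mem_univ, true_and, Nat.lt_min]
      exact and_iff_left i.isLt
    rw [hfil] at hkey'
    calc ∑ i ∈ F, sortDec w i = ∑ i ∈ I₀, w i := hsum
      _ ≤ ∑ i ∈ F, eigsDec (ρ1 - U * ρ2 * Uᴴ) i := hkey'
  · rw [hx, sum_sortDec]
    calc ∑ i, w i = ρ1.trace.re - (U * ρ2 * Uᴴ).trace.re := by
          rw [hw, Finset.sum_sub_distrib, ← hβ', ← re_trace_eq hρ1, ← re_trace_eq hρ2']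
      _ = (ρ1 - U * ρ2 * Uᴴ).trace.re := by rw [Matrix.trace_sub, Complex.sub_re]
      _ = ∑ i, eigsDec (ρ1 - U * ρ2 * Uᴴ) i := re_trace_eq hM

/-- For density matrices `ρ1, ρ2` and a Schur-convex `d`, the minimum of
`d(λ(ρ1 - U ρ2 Uᴴ))` over unitary `U` equals `d(λ(Λ↓(ρ1) - Λ↓(ρ2)))`. -/
theorem stmt_1 {n : ℕ} (ρ1 ρ2 : Matrix (Fin n) (Fin n) ℂ)
    (h1 : IsDensityMatrix ρ1) (h2 : IsDensityMatrix ρ2)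
    (d : (Fin n → ℝ) → ℝ) (hd : SchurConvex d) :
    (∀ U ∈ Matrix.unitaryGroup (Fin n) ℂ,
        d (eigsDec (LambdaDown ρ1 - LambdaDown ρ2)) ≤ d (eigsDec (ρ1 - U * ρ2 * Uᴴ))) ∧
      ∃ U ∈ Matrix.unitaryGroup (Fin n) ℂ,
        d (eigsDec (ρ1 - U * ρ2 * Uᴴ)) = d (eigsDec (LambdaDown ρ1 - LambdaDown ρ2)) := by
  have hH1 : ρ1.IsHermitian := h1.1.1
  have hH2 : ρ2.IsHermitian := h2.1.1
  constructor
  · intro U hU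
    exact hd _ _ (majorizes_key hH1 hH2 hU)
  · obtain ⟨V1, hV1, hd1⟩ := exists_unitary_sorted hH1
    obtain ⟨V2, hV2, hd2⟩ := exists_unitary_sorted hH2
    refine ⟨V1 * V2ᴴ, mul_mem hV1 (unitary_star_mem hV2), ?_⟩
    have h2v : V2ᴴ * V2 = 1 := by
      simpa [Matrix.star_eq_conjTranspose] using Matrix.mem_unitaryGroup_iff'.mp hV2
    have hUρ2 : (V1 * V2ᴴ) * ρ2 * (V1 * V2ᴴ)ᴴ
        = V1 * Matrix.diagonal (fun i => (eigsDec ρ2 i : ℂ)) * V1ᴴ := by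
      rw [Matrix.conjTranspose_mul, Matrix.conjTranspose_conjTranspose]
      conv_lhs => rw [hd2]
      have hassoc : (V1 * V2ᴴ) * (V2 * Matrix.diagonal (fun i => (eigsDec ρ2 i : ℂ)) * V2ᴴ)
            * (V2 * V1ᴴ)
          = V1 * ((V2ᴴ * V2) * (Matrix.diagonal (fun i => (eigsDec ρ2 i : ℂ))
            * ((V2ᴴ * V2) * V1ᴴ))) := by
        simp only [mul_assoc]
      rw [hassoc, h2v, one_mul, one_mul, ← mul_assoc]
    have hdiff : ρ1 - (V1 * V2ᴴ) * ρ2 * (V1 * V2ᴴ)ᴴ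
        = V1 * Matrix.diagonal (fun i => ((eigsDec ρ1 i - eigsDec ρ2 i : ℝ) : ℂ)) * V1ᴴ := by
      rw [hUρ2]
      conv_lhs => rw [hd1]
      rw [← sub_mul, ← mul_sub, diagonal_real_sub]
    have hLD : LambdaDown ρ1 - LambdaDown ρ2
        = Matrix.diagonal (fun i => ((eigsDec ρ1 i - eigsDec ρ2 i : ℝ) : ℂ)) := by
      unfold LambdaDown
      rw [diagonal_real_sub]
    rw [hdiff, hLD, eigsDec_conj_diag hV1, eigsDec_diag_real]
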